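/- Let Σ = {p₁, …, p_r} be a set of r distinct points in ℙ^N (N ≥ 2), let p ∈ ℙ^N \ Σ, and let m ≥ 1 be an integer. Suppose that no m+1 points of Σ lie on a single line together with p (i.e., every line through p contains at most m points of Σ). Then there exist at least min{r−m, ⌊r/2⌋} pairwise disjoint two-element subsets {a, b} of Σ such that the line through a and b does not contain p. -/

import Mathlib

open MvPolynomial

noncomputable section

/-- Points of `ℙ^N` over `ℂ`. -/
abbrev PN (N : ℕ) := Projectivization ℂ (Fin (N + 1) → ℂ)


lemma pairing_lemma {α β : Type*} [DecidableEq α] [DecidableEq β] :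
    ∀ (n : ℕ) (S : Finset α) (f : α → β), S.card = n →
    ∃ P : Finset (α × α),
      min (n - S.sup (fun a => (S.filter (fun x => f x = f a)).card)) (n / 2) ≤ P.card ∧
      (∀ e ∈ P, e.1 ∈ S ∧ e.2 ∈ S ∧ f e.1 ≠ f e.2) ∧
      (∀ e ∈ P, ∀ e' ∈ P, e ≠ e' →
        e.1 ≠ e'.1 ∧ e.1 ≠ e'.2 ∧ e.2 ≠ e'.1 ∧ e.2 ≠ e'.2) := by
  intro n
  induction n using Nat.strong_induction_on with
  | _ n ih =>
    intro S f hS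
    set c := S.sup (fun a => (S.filter (fun x => f x = f a)).card) with hc
    by_cases h0 : min (n - c) (n / 2) = 0
    · exact ⟨∅, by simp [h0], by simp, by simp⟩
    have hn2 : 2 ≤ n := by omega
    have hnc : 1 ≤ n - c := by omega
    have hne : S.Nonempty := by
      rw [← Finset.card_pos, hS]; omega
    obtain ⟨a, haS, hac⟩ := Finset.exists_mem_eq_sup S hne
      (fun a => (S.filter (fun x => f x = f a)).card)
    have hc1 : 1 ≤ c := by
      rw [hc, hac]
      exact Finset.card_pos.2 ⟨a, Finset.mem_filter.2 ⟨haS, rfl⟩⟩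
    -- find b with f b ≠ f a
    have hfilt : (S.filter (fun x => f x = f a)).card < S.card := by
      have h1 : (S.filter (fun x => f x = f a)).card ≤ S.card :=
        Finset.card_filter_le S _
      rcases eq_or_lt_of_le h1 with h | h
      · exfalso
        rw [hS] at h
        rw [hc, hac] at hnc
        omega
      · exact h
    obtain ⟨b, hbS, hbf⟩ : ∃ b ∈ S, ¬ f b = f a := by
      by_contra h
      push_neg at h
      have : S.filter (fun x => f x = f a) = S :=
        Finset.filter_true_of_mem h
      rw [this] at hfilt; omega
    have hab : a ≠ b := fun h => hbf (by rw [← h])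
    set S' := (S.erase a).erase b with hS'
    have hS'sub : S' ⊆ S := (Finset.erase_subset _ _).trans (Finset.erase_subset _ _)
    have haS' : a ∉ S' := fun h => (Finset.mem_erase.1 ((Finset.mem_erase.1 h).2)).1 rfl
    have hbS' : b ∉ S' := fun h => (Finset.mem_erase.1 h).1 rfl
    have hmemS' : ∀ x ∈ S', x ∈ S ∧ x ≠ a ∧ x ≠ b := by
      intro x hx
      obtain ⟨hxb, hxa, hxS⟩ : x ≠ b ∧ x ≠ a ∧ x ∈ S := by
        simpa [hS', Finset.mem_erase, and_assoc] using hx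
      exact ⟨hxS, hxa, hxb⟩
    have hS'card : S'.card = n - 2 := by
      rw [hS', Finset.card_erase_of_mem (Finset.mem_erase.2 ⟨hab.symm, hbS⟩),
        Finset.card_erase_of_mem haS, hS]
      omega
    set c' := S'.sup (fun a => (S'.filter (fun x => f x = f a)).card) with hc'
    have hc'le : c' ≤ c := by
      apply Finset.sup_le
      intro x hxS'
      calc (S'.filter (fun y => f y = f x)).card
          ≤ (S.filter (fun y => f y = f x)).card :=
            Finset.card_le_card (Finset.filter_subset_filter _ hS'sub)
        _ ≤ c := Finset.le_sup (f := fun z => (S.filter (fun y => f y = f z)).card)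
            (hmemS' x hxS').1
    -- key: if c' = c then n ≥ 2c+1
    have hcase : c ≤ c' → 2 * c + 1 ≤ n := by
      intro h
      have hS'ne : S'.Nonempty := by
        rw [← Finset.card_pos]
        by_contra hcon
        have : S' = ∅ := by
          rw [← Finset.card_eq_zero]; omega
        rw [this] at hc'
        simp at hc'
        omega
      obtain ⟨x, hxS', hxc⟩ := Finset.exists_mem_eq_sup S' hS'ne
        (fun a => (S'.filter (fun y => f y = f a)).card)
      obtain ⟨hxS, hxa, hxb⟩ := hmemS' x hxS'
      by_cases hxfa : f x = f a
      · -- fiber of x in S' ⊆ (fiber of a in S).erase a, card ≤ c - 1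
        have hsub : S'.filter (fun y => f y = f x) ⊆
            (S.filter (fun y => f y = f a)).erase a := by
          intro y hy
          rw [Finset.mem_filter] at hy
          obtain ⟨hyS, hya, _⟩ := hmemS' y hy.1
          exact Finset.mem_erase.2 ⟨hya, Finset.mem_filter.2 ⟨hyS, by rw [hy.2, hxfa]⟩⟩
        have h1 := Finset.card_le_card hsub
        have h2 : a ∈ S.filter (fun y => f y = f a) := Finset.mem_filter.2 ⟨haS, rfl⟩
        rw [Finset.card_erase_of_mem h2, ← hac] at h1
        omega
      by_cases hxfb : f x = f b
      · have hsub : S'.filter (fun y => f y = f x) ⊆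
            (S.filter (fun y => f y = f b)).erase b := by
          intro y hy
          rw [Finset.mem_filter] at hy
          obtain ⟨hyS, _, hyb⟩ := hmemS' y hy.1
          exact Finset.mem_erase.2 ⟨hyb, Finset.mem_filter.2 ⟨hyS, by rw [hy.2, hxfb]⟩⟩
        have h1 := Finset.card_le_card hsub
        have h2 : (S.filter (fun y => f y = f b)).card ≤ c :=
          Finset.le_sup (f := fun z => (S.filter (fun y => f y = f z)).card) hbS
        have h3 : b ∈ S.filter (fun y => f y = f b) := Finset.mem_filter.2 ⟨hbS, rfl⟩
        rw [Finset.card_erase_of_mem h3] at h1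
        omega
      · -- third class
        set A := S.filter (fun y => f y = f a) with hA
        set X := S.filter (fun y => f y = f x) with hX
        have hdisj : Disjoint A X := by
          rw [Finset.disjoint_filter]
          intro y _ hy
          rw [hy]; exact fun hcon => hxfa hcon.symm
        have hXc : c ≤ X.card := by
          calc c ≤ c' := h
            _ = (S'.filter (fun y => f y = f x)).card := hxc
            _ ≤ X.card := Finset.card_le_card (Finset.filter_subset_filter _ hS'sub)
        have hbAX : b ∉ A ∪ X := by
          simp only [Finset.mem_union, hA, hX, Finset.mem_filter]
          push_neg
          exact ⟨fun _ => hbf, fun _ => fun hcon => hxfb hcon.symm⟩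
        have hsub : insert b (A ∪ X) ⊆ S := by
          intro y hy
          rcases Finset.mem_insert.1 hy with h | h
          · rw [h]; exact hbS
          · rcases Finset.mem_union.1 h with h | h
            · exact (Finset.mem_filter.1 h).1
            · exact (Finset.mem_filter.1 h).1
        have hcard : (insert b (A ∪ X)).card = A.card + X.card + 1 := by
          rw [Finset.card_insert_of_notMem hbAX, Finset.card_union_of_disjoint hdisj]
        have := Finset.card_le_card hsub
        rw [hcard, hS] at this
        have hAc : A.card = c := hac.symm
        omega
    obtain ⟨P', hP'card, hP'mem, hP'disj⟩ := ih (n - 2) (by omega) S' f hS'card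
    refine ⟨insert (a, b) P', ?_, ?_, ?_⟩
    · have hnotmem : (a, b) ∉ P' := fun h => haS' (hP'mem _ h).1
      rw [Finset.card_insert_of_notMem hnotmem]
      have hkey : min (n - c) (n / 2) ≤ min (n - 2 - c') ((n - 2) / 2) + 1 := by
        rcases Nat.lt_or_ge c' c with h | h
        · omega
        · have := hcase h; omega
      rw [← hc'] at hP'card
      omega
    · intro e he
      rcases Finset.mem_insert.1 he with h | h
      · rw [h]; exact ⟨haS, hbS, fun hcon => hbf hcon.symm⟩
      · obtain ⟨h1, h2, h3⟩ := hP'mem e h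
        exact ⟨hS'sub h1, hS'sub h2, h3⟩
    · intro e he e' he' hee
      rcases Finset.mem_insert.1 he with h | h <;>
        rcases Finset.mem_insert.1 he' with h' | h'
      · exact absurd (h.trans h'.symm) hee
      · obtain ⟨h1, h2, _⟩ := hP'mem e' h'
        obtain ⟨_, ha1, hb1⟩ := hmemS' _ h1
        obtain ⟨_, ha2, hb2⟩ := hmemS' _ h2
        rw [h]
        exact ⟨ha1.symm, ha2.symm, hb1.symm, hb2.symm⟩
      · obtain ⟨h1, h2, _⟩ := hP'mem e h
        obtain ⟨_, ha1, hb1⟩ := hmemS' _ h1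
        obtain ⟨_, ha2, hb2⟩ := hmemS' _ h2
        rw [h']
        exact ⟨ha1, hb1, ha2, hb2⟩
      · exact hP'disj e h e' h' hee


lemma PN.eq_of_smul {N : ℕ} {x y : PN N} {t : ℂ} (ht : t ≠ 0)
    (h : x.rep = t • y.rep) : x = y := by
  have := (Projectivization.mk_eq_mk_iff ℂ x.rep y.rep x.rep_nonzero y.rep_nonzero).2
    ⟨Units.mk0 t ht, by simp [h, Units.smul_def]⟩
  rwa [Projectivization.mk_rep, Projectivization.mk_rep] at this

lemma PN.pair_indep {N : ℕ} {x y : PN N} (h : x ≠ y) :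
    LinearIndependent ℂ ![x.rep, y.rep] := by
  rw [LinearIndependent.pair_iff]
  intro s t hst
  by_cases hs : s = 0
  · subst hs
    simp only [zero_smul, zero_add] at hst
    rcases smul_eq_zero.1 hst with ht | hy
    · exact ⟨rfl, ht⟩
    · exact absurd hy y.rep_nonzero
  · exfalso
    apply h
    apply PN.eq_of_smul (t := -t/s) (by
      intro hc
      apply x.rep_nonzero
      have ht : t = 0 := by
        field_simp at hc
        simpa using hc
      subst ht
      simp only [zero_smul, add_zero] at hst
      rcases smul_eq_zero.1 hst with h1 | h2
      · exact absurd h1 hs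
      · exact h2)
    have : x.rep = (-t/s) • y.rep := by
      have : s • x.rep = -t • y.rep := by
        rw [neg_smul]
        linear_combination (norm := module) hst
      rw [div_eq_mul_inv, mul_comm, ← smul_smul, ← this, smul_smul,
        inv_mul_cancel₀ hs, one_smul]
    exact this

lemma PN.finrank_pair {N : ℕ} {x y : PN N} (h : x ≠ y) :
    Module.finrank ℂ (Submodule.span ℂ ({x.rep, y.rep} : Set (Fin (N + 1) → ℂ))) = 2 := by
  have hi := PN.pair_indep h
  have h2 := finrank_span_eq_card hi
  have hr : Set.range ![x.rep, y.rep] = {x.rep, y.rep} := by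
    simp [Matrix.range_cons, Matrix.range_empty, Set.pair_comm]
  rw [hr] at h2
  simpa using h2

lemma PN.span_eq_iff {N : ℕ} {p a b : PN N} (hpa : p ≠ a) (hpb : p ≠ b) (hab : a ≠ b) :
    p.rep ∈ Submodule.span ℂ ({a.rep, b.rep} : Set (Fin (N + 1) → ℂ)) ↔
    Submodule.span ℂ ({p.rep, a.rep} : Set (Fin (N + 1) → ℂ)) =
      Submodule.span ℂ ({p.rep, b.rep} : Set (Fin (N + 1) → ℂ)) := by
  constructor
  · intro hmem
    obtain ⟨α, β, h⟩ := Submodule.mem_span_pair.1 hmem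
    have hα : α ≠ 0 := by
      rintro rfl
      simp only [zero_smul, zero_add] at h
      have hβ : β ≠ 0 := by
        rintro rfl; simp at h; exact p.rep_nonzero h.symm
      exact hpb (PN.eq_of_smul hβ h.symm)
    have hβ : β ≠ 0 := by
      rintro rfl
      simp only [zero_smul, add_zero] at h
      exact hpa (PN.eq_of_smul hα h.symm)
    have ha' : a.rep ∈ Submodule.span ℂ ({p.rep, b.rep} : Set (Fin (N + 1) → ℂ)) := by
      apply Submodule.mem_span_pair.2 ⟨α⁻¹, -(α⁻¹ * β), ?_⟩
      rw [← h]
      match_scalars <;> field_simp <;> ring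
    have hb' : b.rep ∈ Submodule.span ℂ ({p.rep, a.rep} : Set (Fin (N + 1) → ℂ)) := by
      apply Submodule.mem_span_pair.2 ⟨β⁻¹, -(β⁻¹ * α), ?_⟩
      rw [← h]
      match_scalars <;> field_simp <;> ring
    apply le_antisymm
    · rw [Submodule.span_le]
      rintro v (rfl | rfl)
      · exact Submodule.subset_span (Set.mem_insert _ _)
      · exact ha'
    · rw [Submodule.span_le]
      rintro v (rfl | rfl)
      · exact Submodule.subset_span (Set.mem_insert _ _)
      · exact hb'
  · intro heq
    have ha : a.rep ∈ Submodule.span ℂ ({p.rep, b.rep} : Set (Fin (N + 1) → ℂ)) := by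
      rw [← heq]
      exact Submodule.subset_span (Set.mem_insert_of_mem _ rfl)
    obtain ⟨α, β, h⟩ := Submodule.mem_span_pair.1 ha
    have hα : α ≠ 0 := by
      rintro rfl
      simp only [zero_smul, zero_add] at h
      have hβ : β ≠ 0 := by
        rintro rfl; simp at h; exact a.rep_nonzero h.symm
      exact hab (PN.eq_of_smul hβ h.symm)
    apply Submodule.mem_span_pair.2 ⟨α⁻¹, -(α⁻¹ * β), ?_⟩
    rw [← h]
    match_scalars <;> field_simp <;> ring

theorem disjoint_pairs_spanning_lines_avoiding_point
    (N : ℕ) (hN : 2 ≤ N) (r m : ℕ) (hm : 1 ≤ m)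
    (S : Finset (PN N)) (hr : S.card = r)
    (p : PN N) (hp : p ∉ S)
    (hline : ∀ T : Finset (PN N), T ⊆ S →
      (∃ W : Submodule ℂ (Fin (N + 1) → ℂ), Module.finrank ℂ W = 2 ∧
        p.rep ∈ W ∧ ∀ q ∈ T, q.rep ∈ W) → T.card ≤ m) :
    ∃ P : Finset (PN N × PN N),
      min (r - m) (r / 2) ≤ P.card ∧
      (∀ e ∈ P, e.1 ∈ S ∧ e.2 ∈ S ∧ e.1 ≠ e.2 ∧
        p.rep ∉ Submodule.span ℂ ({e.1.rep, e.2.rep} : Set (Fin (N + 1) → ℂ))) ∧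
      (∀ e ∈ P, ∀ e' ∈ P, e ≠ e' →
        ({e.1, e.2} : Set (PN N)) ∩ ({e'.1, e'.2} : Set (PN N)) = ∅) := by
  classical
  set f : PN N → Submodule ℂ (Fin (N + 1) → ℂ) :=
    fun a => Submodule.span ℂ ({p.rep, a.rep} : Set (Fin (N + 1) → ℂ)) with hf
  obtain ⟨P, hPcard, hPmem, hPdisj⟩ := pairing_lemma r S f hr
  have hpS : ∀ a ∈ S, p ≠ a := fun a ha h => hp (h ▸ ha)
  have hfib : ∀ a ∈ S, (S.filter (fun x => f x = f a)).card ≤ m := by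
    intro a haS
    apply hline _ (Finset.filter_subset _ _)
    refine ⟨f a, PN.finrank_pair (hpS a haS), Submodule.subset_span (Set.mem_insert _ _), ?_⟩
    intro q hq
    have hq' : f q = f a := (Finset.mem_filter.1 hq).2
    rw [← hq']
    exact Submodule.subset_span (Set.mem_insert_of_mem _ rfl)
  have hcle : S.sup (fun a => (S.filter (fun x => f x = f a)).card) ≤ m :=
    Finset.sup_le hfib
  refine ⟨P, ?_, ?_, ?_⟩
  · omega
  · intro e he
    obtain ⟨h1, h2, h3⟩ := hPmem e he
    have hne : e.1 ≠ e.2 := fun h => h3 (by rw [h])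
    refine ⟨h1, h2, hne, fun hmem => h3 ?_⟩
    exact (PN.span_eq_iff (hpS _ h1) (hpS _ h2) hne).1 hmem
  · intro e he e' he' hne
    obtain ⟨d1, d2, d3, d4⟩ := hPdisj e he e' he' hne
    apply Set.eq_empty_iff_forall_notMem.2
    rintro x ⟨hx1, hx2⟩
    rcases hx1 with rfl | rfl <;> rcases hx2 with h | h <;> simp_all
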